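/- Let Q be a subquandle of FQ(X) and define S(Q) = ⋃_{x∈X} {x^w : w ∈ T_x}, where T_x = {w ∈ P_x : ∀ q ∈ Q, ∀ ε ∈ {±1}, |w q^ε| > |w|} and P_x = {w : x^w ∈ Q and (w = 1 or w₁ ≠ x^{±1})}. Then S(Q) is an independent subset of the free group F(X), i.e., S(Q) is a basis of a free subgroup. -/

import Mathlib

open FreeGroup

/-- The free quandle on `X`, realized as the union of the conjugacy classes of the
generators inside the free group `F(X)`. -/
def FQ (X : Type*) : Set (FreeGroup X) :=
  {g | ∃ (x : X) (w : FreeGroup X), g = w⁻¹ * FreeGroup.of x * w}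

/-- A subset of a group that is a subquandle of `Conj G`, i.e. closed under both
conjugation operations `a ▷ b = b⁻¹ a b` and `a ◁ b = b a b⁻¹`. -/
def IsSubquandle {G : Type*} [Group G] (Q : Set G) : Prop :=
  ∀ a ∈ Q, ∀ b ∈ Q, b⁻¹ * a * b ∈ Q ∧ b * a * b⁻¹ ∈ Q

/-- Membership in the subquandle of `Conj G` generated by a set `S`. -/
inductive SubquandleClosure {G : Type*} [Group G] (S : Set G) : G → Prop
  | base {a : G} : a ∈ S → SubquandleClosure S a
  | conj {a b : G} : SubquandleClosure S a → SubquandleClosure S b →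
      SubquandleClosure S (b⁻¹ * a * b)
  | conjInv {a b : G} : SubquandleClosure S a → SubquandleClosure S b →
      SubquandleClosure S (b * a * b⁻¹)

/-- A subset of a group is independent if it freely generates a free subgroup,
i.e. the induced homomorphism from the free group on `S` is injective. -/
def Independent {G : Type*} [Group G] (S : Set G) : Prop :=
  Function.Injective (FreeGroup.lift (Subtype.val : S → G))

/-- A subset `Q` of a group, closed under conjugation, is a free quandle with basis
`S ⊆ Q` if it satisfies the universal property of free quandles: every map from `S`
to a quandle extends uniquely to a quandle morphism on `Q`. -/
def IsFreeQuandleOn {G : Type*} [Group G] (Q S : Set G) : Prop :=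
  ∃ hSQ : S ⊆ Q,
    ∀ (Q' : Type) [Quandle Q'] (f : S → Q'),
      ∃! h : Q → Q',
        (∀ s : S, h ⟨s.1, hSQ s.2⟩ = f s) ∧
        ∀ (a b : Q) (hm : (a : G) * (b : G) * (a : G)⁻¹ ∈ Q),
          h ⟨(a : G) * (b : G) * (a : G)⁻¹, hm⟩ = Shelf.act (h a) (h b)

/-- `w` has no first letter equal to `x` or `x⁻¹`. -/
def FirstLetterNe {X : Type*} [DecidableEq X] (w : FreeGroup X) (x : X) : Prop :=
  w.toWord.head?.map Prod.fst ≠ some x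

/-- `P x`: reduced words `w` with `x^w ∈ Q` which are trivial or do not start
with `x^{±1}`. -/
def Px {X : Type*} [DecidableEq X] (Q : Set (FreeGroup X)) (x : X) : Set (FreeGroup X) :=
  {w | w⁻¹ * FreeGroup.of x * w ∈ Q ∧ (w = 1 ∨ FirstLetterNe w x)}

/-- `T x`: the "non-shrinkable" elements of `P x`. -/
def Tx {X : Type*} [DecidableEq X] (Q : Set (FreeGroup X)) (x : X) : Set (FreeGroup X) :=
  {w ∈ Px Q x | ∀ q ∈ Q, ∀ ε ∈ ({1, -1} : Set ℤ), (w * q ^ ε).norm > w.norm}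

/-- The candidate basis `S(Q) = ⋃ₓ x^{Tₓ}`. -/
def SQbasis {X : Type*} [DecidableEq X] (Q : Set (FreeGroup X)) : Set (FreeGroup X) :=
  ⋃ x : X, {g | ∃ w ∈ Tx Q x, g = w⁻¹ * FreeGroup.of x * w}

/-- In the product of the reduced words `w` and `v`, exactly `k` letters cancel from
the end of `w` against `k` letters from the beginning of `v`. -/
def CancelBound {X : Type*} [DecidableEq X] (w v : FreeGroup X) (k : ℕ) : Prop :=
  (w * v).toWord = w.toWord.take (w.toWord.length - k) ++ v.toWord.drop k

section AuxIndependence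

open FreeGroup

variable {X : Type*} [DecidableEq X]

/-- adjacent letters don't cancel -/
def NoCan {α : Type*} : (α × Bool) → (α × Bool) → Prop := fun a b => ¬(a.1 = b.1 ∧ a.2 = !b.2)

theorem reduce_eq_self_of_chain' {L : List (X × Bool)} (h : List.Chain' NoCan L) :
    reduce L = L := by
  induction L with
  | nil => rfl
  | cons x L ih =>
    have h2 := ih h.tail
    rw [reduce.cons, h2]
    cases L with
    | nil => rfl
    | cons hd tl =>
      have hnc : NoCan x hd := List.isChain_cons_cons.1 h |>.1
      show (if x.1 = hd.1 ∧ x.2 = !hd.2 then tl else x :: hd :: tl) = x :: hd :: tl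
      rw [if_neg hnc]

theorem chain'_of_reduce_eq_self : ∀ {L : List (X × Bool)}, reduce L = L → List.Chain' NoCan L := by
  intro L
  induction L with
  | nil => intro; exact List.isChain_nil
  | cons x L ih =>
    intro h
    rw [reduce.cons] at h
    cases hr : reduce L with
    | nil =>
      rw [hr] at h
      have : L = [] := by injection h with h1 h2; exact h2.symm
      subst this; exact List.isChain_singleton _
    | cons hd tl =>
      rw [hr] at h
      replace h : (if x.1 = hd.1 ∧ x.2 = !hd.2 then tl else x :: hd :: tl) = x :: L := h
      by_cases hc : x.1 = hd.1 ∧ x.2 = !hd.2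
      · rw [if_pos hc] at h
        exfalso
        have h1 : tl.length + 1 ≤ L.length := by
          have := (reduce.red (L := L)).sublist.length_le
          rw [hr] at this; simp at this; omega
        have := congrArg List.length h
        simp at this; omega
      · rw [if_neg hc] at h
        have hL : L = hd :: tl := by injection h with h1 h2; exact h2.symm
        have : reduce L = L := by rw [hr, hL]
        subst hL; exact List.isChain_cons_cons.2 ⟨hc, ih this⟩

theorem reduced_append {a b : List (X × Bool)} (ha : reduce a = a) (hb : reduce b = b)
    (hj : ∀ x ∈ a.getLast?, ∀ y ∈ b.head?, NoCan x y) : reduce (a ++ b) = a ++ b :=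
  reduce_eq_self_of_chain' <| List.isChain_append.2
    ⟨chain'_of_reduce_eq_self ha, chain'_of_reduce_eq_self hb, hj⟩

theorem reduced_prefix {a : List (X × Bool)} (ha : reduce a = a) (n : ℕ) :
    reduce (a.take n) = a.take n :=
  reduce_eq_self_of_chain' <| (chain'_of_reduce_eq_self ha).prefix (List.take_prefix n a)

theorem reduced_suffix {a : List (X × Bool)} (ha : reduce a = a) (n : ℕ) :
    reduce (a.drop n) = a.drop n :=
  reduce_eq_self_of_chain' <| (chain'_of_reduce_eq_self ha).suffix (List.drop_suffix n a)

theorem mk_pair_mul_cancel (z : X) (β : Bool) : mk [(z, β)] * mk [(z, !β)] = (1 : FreeGroup X) := by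
  rw [mul_mk]
  show mk [(z, β), (z, !β)] = 1
  rw [← reduce.self (L := [(z, β), (z, !β)])]
  have h : reduce [(z, β), (z, !β)] = [] := by
    rw [reduce.cons, reduce_singleton]
    simp
  rw [h, one_eq_mk]

theorem exists_cancel : ∀ (b a : List (X × Bool)), reduce a = a → reduce b = b →
    ∃ c, c ≤ a.length ∧ c ≤ b.length ∧
      reduce (a ++ b) = a.take (a.length - c) ++ b.drop c := by
  intro b
  induction b with
  | nil =>
    intro a ha _
    exact ⟨0, by simp, by simp, by simpa using ha⟩
  | cons hd t ih =>
    intro a ha hb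
    have ht : reduce t = t :=
      reduce_eq_self_of_chain' (chain'_of_reduce_eq_self hb).tail
    rcases List.eq_nil_or_concat a with rfl | ⟨a', l, rfl⟩
    · exact ⟨0, by simp, by simp, by simpa using hb⟩
    rw [List.concat_eq_append] at ha ⊢
    obtain ⟨z, β⟩ := l
    obtain ⟨z', β'⟩ := hd
    by_cases hcan : z = z' ∧ β = !β'
    · -- cancellation at the junction
      obtain ⟨rfl, rfl⟩ := hcan
      have ha' : reduce a' = a' := by
        have := reduced_prefix ha a'.length
        simpa using this
      obtain ⟨c, hc1, hc2, hc3⟩ := ih a' ha' ht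
      refine ⟨c + 1, by simp; omega, by simp; omega, ?_⟩
      have hmk : mk ((a' ++ [(z, !β')]) ++ (z, β') :: t) = mk (a' ++ t) := by
        have h1 : (a' ++ [(z, !β')]) ++ (z, β') :: t
            = a' ++ ([(z, !β')] ++ ([(z, β')] ++ t)) := by simp
        have h3 : mk [(z, !β')] * mk [(z, β')] = (1 : FreeGroup X) := by
          have := mk_pair_mul_cancel z (!β')
          simpa using this
        rw [h1, ← mul_mk, ← mul_mk, ← mul_mk, ← mul_assoc, ← mul_assoc,
          mul_assoc (mk a'), h3, mul_one, mul_mk]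
      have hred : reduce ((a' ++ [(z, !β')]) ++ (z, β') :: t) = reduce (a' ++ t) := by
        have h5 := congrArg toWord hmk
        simpa [toWord_mk] using h5
      rw [hred, hc3, List.drop_succ_cons]
      congr 1
      rw [List.take_append]
      simp only [List.length_append, List.length_cons, List.length_nil]
      rw [show a'.length + 1 - (c + 1) = a'.length - c by omega,
        show a'.length - c - a'.length = 0 by omega]
      simp
    · -- no cancellation : whole word reduced
      refine ⟨0, by simp, by simp, ?_⟩
      rw [Nat.sub_zero, List.take_length, List.drop_zero]
      apply reduced_append ha hb
      intro u hu v hv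
      rw [List.getLast?_concat] at hu
      simp only [List.head?_cons, Option.mem_def, Option.some.injEq] at hu hv
      subst hu; subst hv
      exact hcan

theorem toWord_mk_reduced {L : List (X × Bool)} (h : reduce L = L) : (mk L).toWord = L := by
  rw [toWord_mk, h]

theorem norm_mk_reduced {L : List (X × Bool)} (h : reduce L = L) : (mk L).norm = L.length := by
  show (mk L).toWord.length = L.length
  rw [toWord_mk_reduced h]

theorem take_eq_invRev_drop {a b : List (X × Bool)} (ha : reduce a = a) (hb : reduce b = b)
    {c : ℕ} (h : reduce (a ++ b) = a.take (a.length - c) ++ b.drop c) :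
    b.take c = invRev (a.drop (a.length - c)) := by
  set n := a.length with hn
  have l1 : a.take (n - c) ++ (a.drop (n - c) ++ (b.take c ++ b.drop c)) = a ++ b := by
    rw [← List.append_assoc (a.take (n - c)), List.take_append_drop, List.take_append_drop]
  have eq1 : mk (a.take (n - c)) * (mk (a.drop (n - c)) * (mk (b.take c) * mk (b.drop c)))
      = mk (a.take (n - c)) * mk (b.drop c) := by
    rw [mul_mk, mul_mk, mul_mk, mul_mk, l1, ← reduce.self (L := a ++ b), h]
  have e2 := mul_left_cancel eq1
  rw [← mul_assoc] at e2
  have e3 : mk (a.drop (n - c)) * mk (b.take c) = 1 :=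
    mul_right_cancel (b := mk (b.drop c)) (by rw [one_mul]; exact e2)
  have e4 : mk (b.take c) = mk (invRev (a.drop (n - c))) := by
    rw [← inv_mk]
    exact eq_inv_of_mul_eq_one_right e3
  have e5 := congrArg toWord e4
  rw [toWord_mk, toWord_mk, reduced_prefix hb, reduce_invRev, reduced_suffix ha] at e5
  exact e5

/-- a single generator letter with sign -/
def gen (x : X) (e : Bool) : FreeGroup X := mk [(x, e)]

theorem gen_toWord (x : X) (e : Bool) : (gen x e).toWord = [(x, e)] :=
  toWord_mk_reduced (reduce_singleton _)

theorem gen_true (x : X) : gen x true = FreeGroup.of x := by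
  have : (FreeGroup.of x).toWord = [(x, true)] := toWord_of x
  rw [gen, ← this, mk_toWord]

theorem invRev_singleton (x : X) (e : Bool) : invRev [(x, e)] = [(x, !e)] := by
  simp [invRev]

theorem gen_inv (x : X) (e : Bool) : (gen x e)⁻¹ = gen x (!e) := by
  rw [gen, inv_mk, invRev_singleton]; rfl

theorem gen_not_mul_cancel (x : X) (e : Bool) : gen x (!e) * gen x e = 1 := by
  have := mk_pair_mul_cancel x (!e)
  rw [Bool.not_not] at this
  exact this

theorem gen_mul_not_cancel (x : X) (e : Bool) : gen x e * gen x (!e) = 1 := by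
  have := gen_not_mul_cancel x (!e)
  rwa [Bool.not_not] at this

theorem norm_eq_length (w : FreeGroup X) : w.norm = w.toWord.length := rfl

theorem invRev_take (L : List (X × Bool)) (k : ℕ) :
    (invRev L).take k = invRev (L.drop (L.length - k)) := by
  simp only [invRev, List.take_reverse, List.length_map, List.map_drop]

theorem invRev_cons (x : X) (e : Bool) (L : List (X × Bool)) :
    invRev ((x, e) :: L) = invRev L ++ [(x, !e)] := by
  simp [invRev]

theorem conj_gen_toWord {w : FreeGroup X} {x : X} (hfl : w = 1 ∨ FirstLetterNe w x) (e : Bool) :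
    (w⁻¹ * gen x e * w).toWord = invRev w.toWord ++ (x, e) :: w.toWord := by
  have hWred : reduce w.toWord = w.toWord := reduce_toWord w
  have hxh : ∀ p ∈ w.toWord.head?, p.1 ≠ x := by
    intro p hp
    rcases hfl with h1 | h1
    · subst h1; rw [toWord_one] at hp; simp at hp
    · rw [FirstLetterNe] at h1
      simp only [Option.mem_def] at hp
      rw [hp] at h1
      simp only [Option.map_some] at h1
      intro hpx
      exact h1 (by rw [hpx])
  have hred : reduce (invRev w.toWord ++ (x, e) :: w.toWord)
      = invRev w.toWord ++ (x, e) :: w.toWord := by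
    apply reduced_append
    · rw [reduce_invRev, hWred]
    · apply reduce_eq_self_of_chain'
      cases hW : w.toWord with
      | nil => exact List.isChain_singleton _
      | cons p W' =>
        apply List.isChain_cons_cons.2
        constructor
        · have : p.1 ≠ x := hxh p (by rw [hW]; rfl)
          exact fun hc => this hc.1.symm
        · exact chain'_of_reduce_eq_self (by rw [← hW]; exact hWred)
    · intro u hu q hq
      simp only [List.head?_cons, Option.mem_def, Option.some.injEq] at hq
      subst hq
      rw [invRev, List.getLast?_reverse, List.head?_map] at hu
      cases hW : w.toWord with
      | nil => rw [hW] at hu; simp at hu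
      | cons p W' =>
        rw [hW] at hu
        simp only [List.head?_cons, Option.map_some, Option.mem_def, Option.some.injEq] at hu
        subst hu
        have : p.1 ≠ x := hxh p (by rw [hW]; rfl)
        exact fun hc => this hc.1
  have hmk : mk (invRev w.toWord ++ (x, e) :: w.toWord) = w⁻¹ * gen x e * w := by
    have h0 : (x, e) :: w.toWord = [(x, e)] ++ w.toWord := rfl
    rw [h0, ← mul_mk, ← mul_mk, ← inv_mk, mk_toWord, ← mul_assoc]
    rfl
  rw [← hmk, toWord_mk, hred]

end AuxIndependence
section StepLemma

open FreeGroup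

variable {X : Type*} [DecidableEq X]

theorem step_lemma {Q : Set (FreeGroup X)} {P w v : FreeGroup X} {x y : X} {e f : Bool}
    {A : List (X × Bool)} (hw : w ∈ Tx Q x) (hv : v ∈ Tx Q y)
    (hP : P.toWord = A ++ (x, e) :: w.toWord)
    (hne : ¬(w⁻¹ * FreeGroup.of x * w = v⁻¹ * FreeGroup.of y * v ∧ e = !f)) :
    ∃ A', (P * (v⁻¹ * gen y f * v)).toWord = A' ++ (y, f) :: v.toWord := by
  obtain ⟨⟨hwQ, hwfl⟩, hwT⟩ := hw
  obtain ⟨⟨hvQ, hvfl⟩, hvT⟩ := hv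
  have hb : (v⁻¹ * gen y f * v).toWord = invRev v.toWord ++ (y, f) :: v.toWord :=
    conj_gen_toWord hvfl f
  have hared : reduce P.toWord = P.toWord := reduce_toWord P
  have hbred : reduce (v⁻¹ * gen y f * v).toWord = (v⁻¹ * gen y f * v).toWord :=
    reduce_toWord _
  obtain ⟨c, hca, hcb, hcr⟩ := exists_cancel (v⁻¹ * gen y f * v).toWord P.toWord hared hbred
  have hPM : (P * (v⁻¹ * gen y f * v)).toWord
      = P.toWord.take (P.toWord.length - c) ++ (v⁻¹ * gen y f * v).toWord.drop c := by
    have h0 : P * (v⁻¹ * gen y f * v) = mk (P.toWord ++ (v⁻¹ * gen y f * v).toWord) := by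
      rw [← mul_mk, mk_toWord, mk_toWord]
    rw [h0, toWord_mk, hcr]
  have hinv : (v⁻¹ * gen y f * v).toWord.take c
      = invRev (P.toWord.drop (P.toWord.length - c)) := take_eq_invRev_drop hared hbred hcr
  have hlena : P.toWord.length = A.length + w.toWord.length + 1 := by
    rw [hP]; simp [List.length_append]; omega
  have hlenb : (v⁻¹ * gen y f * v).toWord.length = v.toWord.length + v.toWord.length + 1 := by
    rw [hb]; simp [invRev_length]; omega
  have htrans : ∀ k, k ≤ c → (v⁻¹ * gen y f * v).toWord.take k
      = invRev (P.toWord.drop (P.toWord.length - k)) := by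
    intro k hk
    have h1 : (v⁻¹ * gen y f * v).toWord.take k
        = ((v⁻¹ * gen y f * v).toWord.take c).take k := by
      rw [List.take_take, min_eq_left hk]
    rw [h1, hinv, invRev_take]
    congr 1
    rw [List.length_drop, List.drop_drop]
    congr 1
    omega
  by_cases hgood : c ≤ w.toWord.length ∧ c ≤ v.toWord.length
  · -- no core letter is cancelled : invariant propagates
    refine ⟨A ++ (x, e) :: w.toWord.take (w.toWord.length - c) ++ (invRev v.toWord).drop c, ?_⟩
    have h1 : P.toWord.take (P.toWord.length - c)
        = A ++ (x, e) :: w.toWord.take (w.toWord.length - c) := by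
      rw [show P.toWord.length - c = A.length + ((w.toWord.length - c) + 1) by omega, hP,
        List.take_append,
        List.take_of_length_le (by omega : A.length ≤ A.length + ((w.toWord.length - c) + 1)),
        show A.length + ((w.toWord.length - c) + 1) - A.length = (w.toWord.length - c) + 1
          by omega,
        List.take_succ_cons]
    have h2 : (v⁻¹ * gen y f * v).toWord.drop c
        = (invRev v.toWord).drop c ++ (y, f) :: v.toWord := by
      rw [hb, List.drop_append,
        show c - (invRev v.toWord).length = 0 by rw [invRev_length]; omega, List.drop_zero]
    rw [hPM, h1, h2]
    simp [List.append_assoc]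
  · exfalso
    have hor : w.toWord.length < c ∨ v.toWord.length < c := by
      rcases not_and_or.1 hgood with h | h
      · left; omega
      · right; omega
    rcases lt_trichotomy w.toWord.length v.toWord.length with hlt | heq | hgt
    · -- cancellation would swallow the core letter of `w` : contradicts T-condition for v
      have hk : w.toWord.length + 1 ≤ c := by omega
      have h1 := htrans _ hk
      have h2 : P.toWord.drop (P.toWord.length - (w.toWord.length + 1)) = (x, e) :: w.toWord := by
        rw [show P.toWord.length - (w.toWord.length + 1) = A.length by omega, hP,
          List.drop_left]
      have h3 : (v⁻¹ * gen y f * v).toWord.take (w.toWord.length + 1)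
          = invRev (v.toWord.drop (v.toWord.length - (w.toWord.length + 1))) := by
        rw [hb, List.take_append_of_le_length (by rw [invRev_length]; omega), invRev_take]
      have h4 : v.toWord.drop (v.toWord.length - (w.toWord.length + 1)) = (x, e) :: w.toWord :=
        invRev_injective (by rw [← h3, h1, h2])
      have hv_eq : v = mk (v.toWord.take (v.toWord.length - (w.toWord.length + 1)))
          * (gen x e * w) := by
        conv_lhs => rw [← mk_toWord (x := v),
          ← List.take_append_drop (v.toWord.length - (w.toWord.length + 1)) v.toWord]
        rw [← mul_mk, h4]
        congr 1
        rw [show ((x, e) :: w.toWord) = [(x, e)] ++ w.toWord from rfl, ← mul_mk, mk_toWord]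
        rfl
      have hu_norm : (mk (v.toWord.take (v.toWord.length - (w.toWord.length + 1)))).norm
          = v.toWord.length - (w.toWord.length + 1) := by
        rw [norm_mk_reduced (reduced_prefix (reduce_toWord v) _), List.length_take]
        omega
      set ε : ℤ := if e then -1 else 1 with hε
      have hqe : (w⁻¹ * FreeGroup.of x * w) ^ ε = w⁻¹ * gen x (!e) * w := by
        cases e
        · rw [show ε = 1 from rfl, zpow_one]
          rw [show gen x (!false) = FreeGroup.of x from by rw [Bool.not_false, gen_true]]
        · rw [show ε = -1 from rfl, zpow_neg_one,
            show gen x (!true) = (FreeGroup.of x)⁻¹ from by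
              rw [Bool.not_true, ← gen_true, gen_inv, Bool.not_true]]
          group
      have hcontra := hvT _ hwQ ε (by cases e <;> simp [hε])
      have hprod : v * (w⁻¹ * FreeGroup.of x * w) ^ ε
          = mk (v.toWord.take (v.toWord.length - (w.toWord.length + 1))) * w := by
        rw [hqe]
        conv_lhs => rw [hv_eq]
        calc mk (v.toWord.take (v.toWord.length - (w.toWord.length + 1))) * (gen x e * w)
              * (w⁻¹ * gen x (!e) * w)
            = mk (v.toWord.take (v.toWord.length - (w.toWord.length + 1)))
              * (gen x e * gen x (!e)) * w := by group
          _ = _ := by rw [gen_mul_not_cancel, mul_one]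
      have hle := FreeGroup.norm_mul_le
        (mk (v.toWord.take (v.toWord.length - (w.toWord.length + 1)))) w
      rw [hprod] at hcontra
      have hvn : v.norm = v.toWord.length := norm_eq_length v
      have hwn : w.norm = w.toWord.length := norm_eq_length w
      omega
    · -- cancellation would meet in the middle : contradicts reducedness of the S-word
      have hk : v.toWord.length + 1 ≤ c := by omega
      have h1 := htrans _ hk
      have h2 : P.toWord.drop (P.toWord.length - (v.toWord.length + 1)) = (x, e) :: w.toWord := by
        rw [show P.toWord.length - (v.toWord.length + 1) = A.length by omega, hP,
          List.drop_left]
      have h3 : (v⁻¹ * gen y f * v).toWord.take (v.toWord.length + 1)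
          = invRev ((y, !f) :: v.toWord) := by
        rw [hb, List.take_append,
          List.take_of_length_le (by rw [invRev_length]; omega : (invRev v.toWord).length ≤ v.toWord.length + 1),
          show v.toWord.length + 1 - (invRev v.toWord).length = 1 by rw [invRev_length]; omega,
          _root_.invRev_cons, Bool.not_not]
        simp
      have h4 : (y, !f) :: v.toWord = (x, e) :: w.toWord :=
        invRev_injective (by rw [← h3, h1, h2])
      injection h4 with h5 h6
      have hveqw : v = w := toWord_injective h6
      have hyx : y = x := (Prod.ext_iff.1 h5).1
      have hfe : (!f) = e := (Prod.ext_iff.1 h5).2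
      exact hne ⟨by rw [hveqw, hyx], hfe.symm⟩
    · -- cancellation would swallow the core letter of `v` : contradicts T-condition for w
      have hk : v.toWord.length + 1 ≤ c := by omega
      have h1 := htrans _ hk
      have h2 : P.toWord.drop (P.toWord.length - (v.toWord.length + 1))
          = w.toWord.drop (w.toWord.length - (v.toWord.length + 1)) := by
        rw [show P.toWord.length - (v.toWord.length + 1)
            = A.length + ((w.toWord.length - (v.toWord.length + 1)) + 1) by omega, hP,
          List.drop_append,
          List.drop_eq_nil_of_le
            (by omega : A.length ≤ A.length + ((w.toWord.length - (v.toWord.length + 1)) + 1)),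
          List.nil_append,
          show A.length + ((w.toWord.length - (v.toWord.length + 1)) + 1) - A.length
            = (w.toWord.length - (v.toWord.length + 1)) + 1 by omega,
          List.drop_succ_cons]
      have h3 : (v⁻¹ * gen y f * v).toWord.take (v.toWord.length + 1)
          = invRev ((y, !f) :: v.toWord) := by
        rw [hb, List.take_append,
          List.take_of_length_le (by rw [invRev_length]; omega : (invRev v.toWord).length ≤ v.toWord.length + 1),
          show v.toWord.length + 1 - (invRev v.toWord).length = 1 by rw [invRev_length]; omega,
          _root_.invRev_cons, Bool.not_not]
        simp
      have h4 : w.toWord.drop (w.toWord.length - (v.toWord.length + 1)) = (y, !f) :: v.toWord :=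
        (invRev_injective (by rw [← h3, h1, h2])).symm
      have hw_eq : w = mk (w.toWord.take (w.toWord.length - (v.toWord.length + 1)))
          * (gen y (!f) * v) := by
        conv_lhs => rw [← mk_toWord (x := w),
          ← List.take_append_drop (w.toWord.length - (v.toWord.length + 1)) w.toWord]
        rw [← mul_mk, h4]
        congr 1
        rw [show ((y, !f) :: v.toWord) = [(y, !f)] ++ v.toWord from rfl, ← mul_mk, mk_toWord]
        rfl
      have hu_norm : (mk (w.toWord.take (w.toWord.length - (v.toWord.length + 1)))).norm
          = w.toWord.length - (v.toWord.length + 1) := by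
        rw [norm_mk_reduced (reduced_prefix (reduce_toWord w) _), List.length_take]
        omega
      set ε : ℤ := if f then 1 else -1 with hε
      have hqe : (v⁻¹ * FreeGroup.of y * v) ^ ε = v⁻¹ * gen y f * v := by
        cases f
        · rw [show ε = -1 from rfl, zpow_neg_one,
            show gen y false = (FreeGroup.of y)⁻¹ from by
              rw [← gen_true, gen_inv, Bool.not_true]]
          group
        · rw [show ε = 1 from rfl, zpow_one, gen_true]
      have hcontra := hwT _ hvQ ε (by cases f <;> simp [hε])
      have hprod : w * (v⁻¹ * FreeGroup.of y * v) ^ ε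
          = mk (w.toWord.take (w.toWord.length - (v.toWord.length + 1))) * v := by
        rw [hqe]
        conv_lhs => rw [hw_eq]
        calc mk (w.toWord.take (w.toWord.length - (v.toWord.length + 1))) * (gen y (!f) * v)
              * (v⁻¹ * gen y f * v)
            = mk (w.toWord.take (w.toWord.length - (v.toWord.length + 1)))
              * (gen y (!f) * gen y f) * v := by group
          _ = _ := by rw [gen_not_mul_cancel, mul_one]
      have hle := FreeGroup.norm_mul_le
        (mk (w.toWord.take (w.toWord.length - (v.toWord.length + 1)))) v
      rw [hprod] at hcontra
      have hvn : v.norm = v.toWord.length := norm_eq_length v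
      have hwn : w.norm = w.toWord.length := norm_eq_length w
      omega

end StepLemma
section KeyLemma

open FreeGroup

variable {X : Type*} [DecidableEq X]

theorem lift_single {S : Set (FreeGroup X)} (t : ↥S) (fb : Bool) {y : X} {v : FreeGroup X}
    (ht : (t : FreeGroup X) = v⁻¹ * FreeGroup.of y * v) :
    FreeGroup.lift (Subtype.val : ↥S → FreeGroup X) (mk [(t, fb)]) = v⁻¹ * gen y fb * v := by
  cases fb
  · have h1 : mk [(t, false)] = (FreeGroup.of t)⁻¹ := by
      rw [← gen_true, gen_inv, Bool.not_true]; rfl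
    rw [h1, _root_.map_inv, FreeGroup.lift_apply_of, ht,
      show gen y false = (FreeGroup.of y)⁻¹ from by rw [← gen_true, gen_inv, Bool.not_true]]
    group
  · have h1 : mk [(t, true)] = FreeGroup.of t := by rw [← gen_true]; rfl
    rw [h1, FreeGroup.lift_apply_of, ht, gen_true]

theorem key_lemma {Q : Set (FreeGroup X)} :
    ∀ L : List (↥(SQbasis Q) × Bool), List.Chain' NoCan L → L ≠ [] →
    ∃ (x : X) (w : FreeGroup X) (e : Bool) (A : List (X × Bool)) (s : ↥(SQbasis Q)),
      w ∈ Tx Q x ∧ (s : FreeGroup X) = w⁻¹ * FreeGroup.of x * w ∧ L.getLast? = some (s, e) ∧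
      (FreeGroup.lift (Subtype.val : ↥(SQbasis Q) → FreeGroup X) (mk L)).toWord
        = A ++ (x, e) :: w.toWord := by
  intro L
  induction L using List.reverseRecOn with
  | nil => intro _ h; exact absurd rfl h
  | append_singleton l p ih =>
    intro hch _
    obtain ⟨t, fb⟩ := p
    obtain ⟨y, v, hv, hts⟩ : ∃ y v, v ∈ Tx Q y ∧ (t : FreeGroup X) = v⁻¹ * FreeGroup.of y * v := by
      have ht2 := t.2
      simp only [SQbasis, Set.mem_iUnion, Set.mem_setOf_eq] at ht2
      obtain ⟨y, w, hw, heq⟩ := ht2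
      exact ⟨y, w, hw, heq⟩
    rcases eq_or_ne l [] with rfl | hl
    · -- base case : a single letter
      refine ⟨y, v, fb, invRev v.toWord, t, hv, hts, by simp, ?_⟩
      rw [List.nil_append, lift_single t fb hts]
      exact conj_gen_toWord hv.1.2 fb
    · -- inductive step
      have hch' : List.Chain' NoCan l := hch.prefix (List.prefix_append l [(t, fb)])
      obtain ⟨x, w, e, A, s, hw, hs, hlast, hword⟩ := ih hch' hl
      have hjun : NoCan (s, e) (t, fb) := by
        obtain ⟨_, _, hj⟩ := List.isChain_append.1 hch
        exact hj (s, e) hlast (t, fb) rfl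
      have hne : ¬(w⁻¹ * FreeGroup.of x * w = v⁻¹ * FreeGroup.of y * v ∧ e = !fb) := by
        rintro ⟨h1, h2⟩
        exact hjun ⟨Subtype.ext (hs.trans (h1.trans hts.symm)), h2⟩
      obtain ⟨A', hA'⟩ := step_lemma hw hv hword hne
      refine ⟨y, v, fb, A', t, hv, hts, List.getLast?_concat, ?_⟩
      have hsplit : FreeGroup.lift (Subtype.val : ↥(SQbasis Q) → FreeGroup X) (mk (l ++ [(t, fb)]))
          = FreeGroup.lift (Subtype.val : ↥(SQbasis Q) → FreeGroup X) (mk l)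
            * (v⁻¹ * gen y fb * v) := by
        rw [← mul_mk, _root_.map_mul, lift_single t fb hts]
      rw [hsplit]
      exact hA'

end KeyLemma

/-- For a subquandle `Q` of `FQ X`, the set `S(Q)` is independent in `F(X)`,
i.e. it is a basis of a free subgroup. -/
theorem stmt_5 {X : Type*} [DecidableEq X] (Q : Set (FreeGroup X))
    (hQ : Q ⊆ FQ X) (hsub : IsSubquandle Q) :
    Independent (SQbasis Q) := by
  rw [Independent]
  rw [injective_iff_map_eq_one]
  intro g hg
  by_contra hgne
  have hL : g.toWord ≠ [] := by rwa [ne_eq, FreeGroup.toWord_eq_nil_iff]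
  have hch : List.Chain' NoCan g.toWord :=
    chain'_of_reduce_eq_self (FreeGroup.reduce_toWord g)
  obtain ⟨x, w, e, A, s, -, -, -, hword⟩ := key_lemma g.toWord hch hL
  rw [FreeGroup.mk_toWord, hg, FreeGroup.toWord_one] at hword
  exact List.append_ne_nil_of_right_ne_nil A (List.cons_ne_nil _ _) hword.symm
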